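/- Let p̄_n(z) = 2(d/(2πn))^{d/2} exp(−d‖z‖²/(2n)) and fix z ∈ ℤ^d, z ≠ 0. Define D(z) = ∑_{n=1}^∞ (p̄_n(z)/2)·P(𝒩 ≥ n) for an ℕ-valued random variable 𝒩. Then D(z) satisfies the sandwich bounds: ∫_0^∞ s^{d/2−2}e^{−s}(1 + 2s/(d‖z‖²))^{−d/2} P(2𝒩/(d‖z‖²) > 1/s) ds ≤ (2π^{d/2}/d)‖z‖^{d−2} D(z) ≤ (π^{d/2}/d)‖z‖^{d−2} p̄_1(z) + ∫_0^{d‖z‖²/4} s^{d/2−2}e^{−s}(1 − 2s/(d‖z‖²))^{−d/2} P(2𝒩/(d‖z‖²) > 1/s − 4/(d‖z‖²)) ds. -/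

import Mathlib

open MeasureTheory Set Real

/-- Euclidean norm of a point of `ℤ^d`. -/
noncomputable def znorm (d : ℕ) (z : Fin d → ℤ) : ℝ :=
  Real.sqrt (∑ i, ((z i : ℝ)) ^ 2)

/-- The Gaussian local limit approximation to the `n`-step transition probability. -/
noncomputable def pbar (d : ℕ) (n : ℕ) (z : Fin d → ℤ) : ℝ :=
  2 * ((d : ℝ) / (2 * π * n)) ^ ((d : ℝ) / 2) *
    Real.exp (-(d : ℝ) * znorm d z ^ 2 / (2 * n))

open scoped ENNReal

lemma my_lintegral_image {s : Set ℝ} {f f' : ℝ → ℝ}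
    (hs : MeasurableSet s) (hf' : ∀ x ∈ s, HasDerivWithinAt f (f' x) s x)
    (hf : Set.InjOn f s) (g : ℝ → ℝ≥0∞) :
    ∫⁻ x in f '' s, g x = ∫⁻ x in s, ENNReal.ofReal |f' x| * g (f x) := by
  simpa only [ContinuousLinearMap.det_toSpanSingleton] using
    lintegral_image_eq_lintegral_abs_det_fderiv_mul volume hs
      (fun x hx => (hf' x hx).hasFDerivWithinAt) hf g

lemma key_alg {dd r t : ℝ} (hd : 0 < dd) (hr : 0 < r) (ht : 0 < t) :
    2 * π ^ (dd/2) / dd * r ^ (dd - 2) * ((dd / (2*π*t)) ^ (dd/2))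
      = (dd * r^2 / 2) ^ (dd/2 - 1) * t ^ (-(dd/2)) := by
  have hπ := Real.pi_pos
  have hL : 0 < 2 * π ^ (dd/2) / dd * r ^ (dd - 2) * ((dd / (2*π*t)) ^ (dd/2)) := by
    positivity
  have hR : 0 < (dd * r^2 / 2) ^ (dd/2 - 1) * t ^ (-(dd/2)) := by positivity
  rw [← Real.exp_log hL, ← Real.exp_log hR]
  congr 1
  have e1 : log (2 * π ^ (dd/2) / dd * r ^ (dd - 2) * ((dd / (2*π*t)) ^ (dd/2)))
      = (log 2 + dd/2 * log π - log dd) + (dd - 2) * log r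
        + dd/2 * (log dd - (log 2 + log π + log t)) := by
    rw [Real.log_mul (by positivity) (by positivity),
        Real.log_mul (by positivity) (by positivity),
        Real.log_div (by positivity) (by positivity),
        Real.log_mul (by positivity) (by positivity),
        Real.log_rpow hπ, Real.log_rpow hr, Real.log_rpow (by positivity),
        Real.log_div (by positivity) (by positivity),
        Real.log_mul (by positivity) (by positivity),
        Real.log_mul (by positivity) (by positivity)]
  have e2 : log ((dd * r^2 / 2) ^ (dd/2 - 1) * t ^ (-(dd/2)))
      = (dd/2 - 1) * (log dd + 2 * log r - log 2) + (-(dd/2)) * log t := by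
    rw [Real.log_mul (by positivity) (by positivity),
        Real.log_rpow (by positivity), Real.log_rpow ht,
        Real.log_div (by positivity) (by positivity),
        Real.log_mul (by positivity) (by positivity),
        Real.log_pow]
    push_cast; ring
  rw [e1, e2]; ring

lemma term_eq {dd r t : ℝ} (hd : 0 < dd) (hr : 0 < r) (ht : 0 < t) :
    2 * π ^ (dd/2) / dd * r ^ (dd - 2)
        * (2 * (dd/(2*π*t)) ^ (dd/2) * Real.exp (-dd * r^2 / (2*t)) / 2)
      = (dd*r^2/2) ^ (dd/2-1) * t ^ (-(dd/2)) * Real.exp (-(dd*r^2/(2*t))) := by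
  have hk := key_alg hd hr ht
  have he : -dd * r^2/(2*t) = -(dd*r^2/(2*t)) := by ring
  calc 2 * π ^ (dd/2) / dd * r ^ (dd-2)
          * (2 * (dd/(2*π*t)) ^ (dd/2) * Real.exp (-dd*r^2/(2*t)) / 2)
      = (2 * π ^ (dd/2) / dd * r ^ (dd-2) * (dd/(2*π*t)) ^ (dd/2))
          * Real.exp (-dd*r^2/(2*t)) := by ring
    _ = ((dd*r^2/2) ^ (dd/2-1) * t ^ (-(dd/2))) * Real.exp (-(dd*r^2/(2*t))) := by
        rw [hk, he]
    _ = _ := by ring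

lemma pow_alg_lower {c t dd : ℝ} (hc : 0 < c) (ht : 0 < t) :
    c/(2*t^2) * (c/(2*t)) ^ (dd/2-2) * (1 + 2*(c/(2*t))/c) ^ (-dd/2)
      = (c/2) ^ (dd/2-1) * (t+1) ^ (-(dd/2)) := by
  have h1 : 1 + 2*(c/(2*t))/c = (t+1)/t := by field_simp
  rw [h1]
  have hL : 0 < c/(2*t^2) * (c/(2*t)) ^ (dd/2-2) * ((t+1)/t) ^ (-dd/2) := by positivity
  have hR : 0 < (c/2) ^ (dd/2-1) * (t+1) ^ (-(dd/2)) := by positivity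
  rw [← Real.exp_log hL, ← Real.exp_log hR]
  congr 1
  have e1 : log (c/(2*t^2) * (c/(2*t)) ^ (dd/2-2) * ((t+1)/t) ^ (-dd/2))
      = (log c - (log 2 + 2 * log t)) + (dd/2-2) * (log c - (log 2 + log t))
        + (-dd/2) * (log (t+1) - log t) := by
    rw [Real.log_mul (by positivity) (by positivity),
        Real.log_mul (by positivity) (by positivity),
        Real.log_rpow (by positivity), Real.log_rpow (by positivity),
        Real.log_div (by positivity) (by positivity),
        Real.log_div (by positivity) (by positivity),
        Real.log_div (by positivity) (by positivity),
        Real.log_mul (by positivity) (by positivity),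
        Real.log_mul (by positivity) (by positivity),
        Real.log_pow]
    push_cast; ring
  have e2 : log ((c/2) ^ (dd/2-1) * (t+1) ^ (-(dd/2)))
      = (dd/2-1) * (log c - log 2) + (-(dd/2)) * log (t+1) := by
    rw [Real.log_mul (by positivity) (by positivity),
        Real.log_rpow (by positivity), Real.log_rpow (by positivity),
        Real.log_div (by positivity) (by positivity)]
  rw [e1, e2]; ring

lemma pow_alg_upper {c t dd : ℝ} (hc : 0 < c) (ht : 1 < t) :
    c/(2*t^2) * (c/(2*t)) ^ (dd/2-2) * (1 - 2*(c/(2*t))/c) ^ (-dd/2)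
      = (c/2) ^ (dd/2-1) * (t-1) ^ (-(dd/2)) := by
  have ht0 : 0 < t := lt_trans one_pos ht
  have ht1 : 0 < t - 1 := by linarith
  have h1 : 1 - 2*(c/(2*t))/c = (t-1)/t := by field_simp
  rw [h1]
  have hL : 0 < c/(2*t^2) * (c/(2*t)) ^ (dd/2-2) * ((t-1)/t) ^ (-dd/2) := by positivity
  have hR : 0 < (c/2) ^ (dd/2-1) * (t-1) ^ (-(dd/2)) := by positivity
  rw [← Real.exp_log hL, ← Real.exp_log hR]
  congr 1
  have e1 : log (c/(2*t^2) * (c/(2*t)) ^ (dd/2-2) * ((t-1)/t) ^ (-dd/2))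
      = (log c - (log 2 + 2 * log t)) + (dd/2-2) * (log c - (log 2 + log t))
        + (-dd/2) * (log (t-1) - log t) := by
    rw [Real.log_mul (by positivity) (by positivity),
        Real.log_mul (by positivity) (by positivity),
        Real.log_rpow (by positivity), Real.log_rpow (by positivity),
        Real.log_div (by positivity) (by positivity),
        Real.log_div (by positivity) (by positivity),
        Real.log_div (by positivity) (by positivity),
        Real.log_mul (by positivity) (by positivity),
        Real.log_mul (by positivity) (by positivity),
        Real.log_pow]
    push_cast; ring
  have e2 : log ((c/2) ^ (dd/2-1) * (t-1) ^ (-(dd/2)))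
      = (dd/2-1) * (log c - log 2) + (-(dd/2)) * log (t-1) := by
    rw [Real.log_mul (by positivity) (by positivity),
        Real.log_rpow (by positivity), Real.log_rpow (by positivity),
        Real.log_div (by positivity) (by positivity)]
  rw [e1, e2]; ring

lemma Ioi_eq_iUnion' (k : ℝ) :
    Ioi k = ⋃ n : ℕ, Ioc (k + n) (k + n + 1) := by
  ext x
  simp only [mem_Ioi, mem_iUnion, mem_Ioc]
  constructor
  · intro hx
    have hxk : 0 < x - k := by linarith
    set m := ⌈x - k⌉₊ with hm
    have hm1 : 1 ≤ m := Nat.one_le_ceil_iff.2 hxk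
    have hc : ((m - 1 : ℕ) : ℝ) = (m:ℝ) - 1 := by
      push_cast [Nat.cast_sub hm1]; ring
    refine ⟨m - 1, ?_, ?_⟩
    · have h1 : (m:ℝ) < (x - k) + 1 := Nat.ceil_lt_add_one hxk.le
      rw [hc]; linarith
    · rw [hc]
      have := Nat.le_ceil (x - k)
      linarith
  · rintro ⟨n, hn1, _⟩
    have : (0:ℝ) ≤ n := Nat.cast_nonneg n
    linarith

lemma pd_Ioc' (k : ℝ) : Pairwise (Function.onFun Disjoint
    (fun n : ℕ => Ioc (k + n) (k + n + 1))) := by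
  intro i j hij
  have h : ∀ a b : ℕ, a < b → Disjoint (Ioc (k + a) (k + a + 1))
      (Ioc (k + b) (k + b + 1)) := by
    intro a b hab
    apply Set.Ioc_disjoint_Ioc.2
    have : (a:ℝ) + 1 ≤ (b:ℝ) := by exact_mod_cast Nat.succ_le_of_lt hab
    calc min (k + a + 1) (k + b + 1) ≤ k + a + 1 := min_le_left _ _
      _ ≤ k + b := by linarith
      _ ≤ max (k + a) (k + b) := le_max_right _ _
  rcases lt_or_gt_of_ne hij with h1 | h1
  · exact h i j h1
  · exact (h j i h1).symm

lemma image_inv_Ioi_pos {c a : ℝ} (hc : 0 < c) (ha : 0 < a) :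
    (fun t : ℝ => c / (2 * t)) '' Ioi a = Ioo 0 (c / (2 * a)) := by
  ext y
  simp only [mem_image, mem_Ioi, mem_Ioo]
  constructor
  · rintro ⟨t, hta, rfl⟩
    have ht : 0 < t := lt_trans ha hta
    constructor
    · positivity
    · apply div_lt_div_of_pos_left hc (by positivity)
      linarith
  · rintro ⟨hy0, hy1⟩
    refine ⟨c / (2 * y), ?_, ?_⟩
    · rw [lt_div_iff₀ (by positivity)]
      have h2 := (lt_div_iff₀ (by positivity : (0:ℝ) < 2 * a)).1 hy1
      nlinarith
    · field_simp

lemma image_inv_Ioi_zero {c : ℝ} (hc : 0 < c) :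
    (fun t : ℝ => c / (2 * t)) '' Ioi 0 = Ioi 0 := by
  ext y
  simp only [mem_image, mem_Ioi]
  constructor
  · rintro ⟨t, ht, rfl⟩; positivity
  · intro hy; exact ⟨c / (2 * y), by positivity, by field_simp⟩

lemma injOn_inv {c a : ℝ} (hc : 0 < c) (ha : 0 ≤ a) :
    Set.InjOn (fun t : ℝ => c / (2 * t)) (Ioi a) := by
  intro x hx y hy hxy
  simp only [mem_Ioi] at hx hy
  have hx0 : 0 < x := lt_of_le_of_lt ha hx
  have hy0 : 0 < y := lt_of_le_of_lt ha hy
  have h0 : c / (2 * x) = c / (2 * y) := hxy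
  rw [div_eq_div_iff (by positivity) (by positivity)] at h0
  have := mul_left_cancel₀ hc.ne' h0
  linarith

lemma hasDeriv_inv {c a : ℝ} (ha : 0 ≤ a) :
    ∀ t ∈ Ioi a, HasDerivWithinAt (fun t : ℝ => c / (2 * t)) (-(c / (2 * t^2))) (Ioi a) t := by
  intro t ht
  simp only [mem_Ioi] at ht
  have ht0 : t ≠ 0 := by intro h; rw [h] at ht; exact absurd ht (not_lt.2 ha)
  have hfun : (fun t : ℝ => c / (2 * t)) = fun t => c / 2 * t⁻¹ := by
    funext x; rw [div_mul_eq_div_div, div_eq_mul_inv]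
  have h2 := (hasDerivAt_inv ht0).const_mul (c/2)
  have h3 : HasDerivAt (fun t : ℝ => c / (2 * t)) (c / 2 * -(t^2)⁻¹) t := by
    rw [hfun]; exact h2
  have h4 : c / 2 * -(t^2)⁻¹ = -(c / (2 * t^2)) := by
    field_simp
  exact (h4 ▸ h3).hasDerivWithinAt

set_option maxHeartbeats 1000000 in
/-- Sandwich bounds for the Gaussian main term
`D(z) = ∑_{n≥1} (p̄ₙ(z)/2) P(𝒩 ≥ n)`, where `ν` is the law of `𝒩`. -/
theorem gaussian_main_term_sandwich (d : ℕ) (hd : 3 ≤ d)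
    (ν : Measure ℕ) [IsProbabilityMeasure ν]
    (z : Fin d → ℤ) (hz : z ≠ 0) :
    (∫ s in Ioi (0 : ℝ),
        s ^ ((d : ℝ) / 2 - 2) * Real.exp (-s) *
          (1 + 2 * s / ((d : ℝ) * znorm d z ^ 2)) ^ (-(d : ℝ) / 2) *
          (ν {m : ℕ | 1 / s < 2 * (m : ℝ) / ((d : ℝ) * znorm d z ^ 2)}).toReal) ≤
      (2 * π ^ ((d : ℝ) / 2) / (d : ℝ)) * znorm d z ^ ((d : ℝ) - 2) *
        (∑' n : ℕ, (pbar d (n + 1) z / 2) * (ν {m : ℕ | n + 1 ≤ m}).toReal) ∧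
    (2 * π ^ ((d : ℝ) / 2) / (d : ℝ)) * znorm d z ^ ((d : ℝ) - 2) *
        (∑' n : ℕ, (pbar d (n + 1) z / 2) * (ν {m : ℕ | n + 1 ≤ m}).toReal) ≤
      (π ^ ((d : ℝ) / 2) / (d : ℝ)) * znorm d z ^ ((d : ℝ) - 2) * pbar d 1 z +
        ∫ s in Ioc (0 : ℝ) ((d : ℝ) * znorm d z ^ 2 / 4),
          s ^ ((d : ℝ) / 2 - 2) * Real.exp (-s) *
            (1 - 2 * s / ((d : ℝ) * znorm d z ^ 2)) ^ (-(d : ℝ) / 2) *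
            (ν {m : ℕ | 1 / s - 4 / ((d : ℝ) * znorm d z ^ 2) <
                2 * (m : ℝ) / ((d : ℝ) * znorm d z ^ 2)}).toReal := by
  classical
  have hd0 : (0:ℝ) < (d:ℝ) := by
    have : 0 < d := lt_of_lt_of_le (by norm_num) hd
    exact_mod_cast this
  have hd32 : (3:ℝ) ≤ (d:ℝ) := by exact_mod_cast hd
  set r : ℝ := znorm d z with hrdef
  have hr : 0 < r := by
    rw [hrdef]
    unfold znorm
    apply Real.sqrt_pos.2
    have hex : ∃ i, z i ≠ 0 := by
      by_contra h; push_neg at h; exact hz (funext h)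
    obtain ⟨i, hi⟩ := hex
    have h1 : (0:ℝ) < ((z i : ℝ))^2 := by
      have : ((z i : ℝ)) ≠ 0 := by exact_mod_cast hi
      positivity
    exact lt_of_lt_of_le h1
      (Finset.single_le_sum (f := fun j => ((z j : ℝ))^2)
        (fun j _ => sq_nonneg _) (Finset.mem_univ i))
  set c : ℝ := (d:ℝ) * r ^ 2 with hcdef
  have hc : 0 < c := by rw [hcdef]; positivity
  set C : ℝ := (c/2) ^ ((d:ℝ)/2 - 1) with hCdef
  have hC : 0 < C := by rw [hCdef]; positivity
  set Nf : ℝ → ℝ := fun t => (ν {m : ℕ | t < (m:ℝ)}).toReal with hNfdef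
  have hNf_anti : Antitone Nf := by
    intro s t hst
    apply ENNReal.toReal_mono (measure_ne_top ν _)
    exact measure_mono (fun m hm => lt_of_le_of_lt hst hm)
  have hNf_meas : Measurable Nf := hNf_anti.measurable
  have hNf_nonneg : ∀ t, 0 ≤ Nf t := fun t => ENNReal.toReal_nonneg
  have hNf_le_one : ∀ t, Nf t ≤ 1 := by
    intro t
    have h1 : ν {m : ℕ | t < (m:ℝ)} ≤ 1 := prob_le_one
    have := ENNReal.toReal_mono ENNReal.one_ne_top h1
    simpa using this
  have hνset : ∀ n : ℕ, (ν {m : ℕ | n + 1 ≤ m}).toReal = Nf n := by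
    intro n
    have hseteq : {m : ℕ | n + 1 ≤ m} = {m : ℕ | ((n:ℕ):ℝ) < (m:ℝ)} := by
      ext m
      simp only [mem_setOf_eq, Nat.cast_lt]
      exact Nat.succ_le_iff
    rw [hseteq, hNfdef]
  -- the summand sequence
  set a : ℕ → ℝ :=
    fun n => C * ((n:ℝ)+1) ^ (-((d:ℝ)/2)) * Real.exp (-(c/(2*((n:ℝ)+1)))) * Nf n
    with hadef
  have hterm' : ∀ n : ℕ, 2 * π ^ ((d:ℝ)/2) / (d:ℝ) * r ^ ((d:ℝ)-2) * (pbar d (n+1) z / 2)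
      = C * ((n:ℝ)+1) ^ (-((d:ℝ)/2)) * Real.exp (-(c/(2*((n:ℝ)+1)))) := by
    intro n
    have ht : (0:ℝ) < (n:ℝ)+1 := by positivity
    have hpb : pbar d (n+1) z
        = 2 * ((d:ℝ)/(2*π*((n:ℝ)+1))) ^ ((d:ℝ)/2)
            * Real.exp (-(d:ℝ) * r^2 / (2*((n:ℝ)+1))) := by
      rw [hrdef]
      unfold pbar
      push_cast
      ring_nf
    rw [hpb]
    have h2 := term_eq (dd := (d:ℝ)) (r := r) (t := (n:ℝ)+1) hd0 hr ht
    rw [h2, ← hcdef, ← hCdef]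
  have hRD : 2 * π ^ ((d:ℝ)/2) / (d:ℝ) * r ^ ((d:ℝ)-2)
      * (∑' n : ℕ, pbar d (n+1) z / 2 * (ν {m : ℕ | n + 1 ≤ m}).toReal)
      = ∑' n, a n := by
    rw [← tsum_mul_left]
    refine tsum_congr fun n => ?_
    rw [← mul_assoc, hνset n, hterm' n, hadef]
  have hbound_summable : Summable (fun n : ℕ => C * ((n:ℝ)+1) ^ (-((d:ℝ)/2))) := by
    apply Summable.mul_left
    have h1 : Summable (fun n : ℕ => (n:ℝ) ^ (-((d:ℝ)/2))) :=
      Real.summable_nat_rpow.2 (by linarith)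
    have h2 := (summable_nat_add_iff 1).2 h1
    apply h2.congr
    intro n
    push_cast
    ring_nf
  have ha_nonneg : ∀ n, 0 ≤ a n := by
    intro n
    rw [hadef]
    have := hNf_nonneg ((n:ℕ):ℝ)
    positivity
  have ha_le : ∀ n, a n ≤ C * ((n:ℝ)+1) ^ (-((d:ℝ)/2)) := by
    intro n
    rw [hadef]
    have h1 : Real.exp (-(c/(2*((n:ℝ)+1)))) ≤ 1 := by
      rw [Real.exp_le_one_iff]
      have : 0 < c/(2*((n:ℝ)+1)) := by positivity
      linarith
    have h2 : 0 ≤ C * ((n:ℝ)+1) ^ (-((d:ℝ)/2)) := by positivity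
    calc C * ((n:ℝ)+1) ^ (-((d:ℝ)/2)) * Real.exp (-(c/(2*((n:ℝ)+1)))) * Nf n
        ≤ C * ((n:ℝ)+1) ^ (-((d:ℝ)/2)) * 1 * 1 := by
          apply mul_le_mul _ (hNf_le_one _) (hNf_nonneg _)
          · nlinarith [Real.exp_pos (-(c/(2*((n:ℝ)+1))))]
          · nlinarith [Real.exp_pos (-(c/(2*((n:ℝ)+1))))]
      _ = C * ((n:ℝ)+1) ^ (-((d:ℝ)/2)) := by ring
  have hSa : Summable a := Summable.of_nonneg_of_le ha_nonneg ha_le hbound_summable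
  have htsum_nonneg : 0 ≤ ∑' n, a n := tsum_nonneg ha_nonneg
  -- functions for the lower bound
  set φ : ℝ → ℝ := fun s =>
    s ^ ((d:ℝ)/2-2) * Real.exp (-s) * (1+2*s/c) ^ (-(d:ℝ)/2) * Nf (c/(2*s)) with hφdef
  set ψ : ℝ → ℝ := fun t =>
    C * (t+1) ^ (-((d:ℝ)/2)) * Real.exp (-(c/(2*t))) * Nf t with hψdef
  have hinv_meas : Measurable (fun s : ℝ => c/(2*s)) :=
    measurable_const.div (measurable_id.const_mul 2)
  have hφmeas : Measurable φ := by
    rw [hφdef]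
    exact (by fun_prop : Measurable (fun s : ℝ =>
        s ^ ((d:ℝ)/2-2) * Real.exp (-s) * (1+2*s/c) ^ (-(d:ℝ)/2))).mul
      (hNf_meas.comp hinv_meas)
  have hψmeas : Measurable ψ := by
    rw [hψdef]
    exact (by fun_prop : Measurable (fun t : ℝ =>
        C * (t+1) ^ (-((d:ℝ)/2)) * Real.exp (-(c/(2*t))))).mul hNf_meas
  have hψtrans : ∀ t ∈ Ioi (0:ℝ),
      ENNReal.ofReal |(-(c / (2 * t^2)))| * ENNReal.ofReal (φ (c/(2*t)))
        = ENNReal.ofReal (ψ t) := by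
    intro t ht
    simp only [mem_Ioi] at ht
    have harg : c/(2*(c/(2*t))) = t := by field_simp
    have hreal : c/(2*t^2) * φ (c/(2*t)) = ψ t := by
      rw [hφdef, hψdef]
      simp only
      rw [harg]
      have hk := pow_alg_lower (dd := (d:ℝ)) hc ht
      calc c/(2*t^2) * ((c/(2*t)) ^ ((d:ℝ)/2-2) * Real.exp (-(c/(2*t)))
              * (1+2*(c/(2*t))/c) ^ (-(d:ℝ)/2) * Nf t)
          = (c/(2*t^2) * (c/(2*t)) ^ ((d:ℝ)/2-2) * (1+2*(c/(2*t))/c) ^ (-(d:ℝ)/2))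
              * (Real.exp (-(c/(2*t))) * Nf t) := by ring
        _ = ((c/2) ^ ((d:ℝ)/2-1) * (t+1) ^ (-((d:ℝ)/2)))
              * (Real.exp (-(c/(2*t))) * Nf t) := by rw [hk]
        _ = C * (t+1) ^ (-((d:ℝ)/2)) * Real.exp (-(c/(2*t))) * Nf t := by
              rw [hCdef]; ring
    rw [abs_neg, abs_of_nonneg (by positivity : (0:ℝ) ≤ c/(2*t^2)),
        ← ENNReal.ofReal_mul (by positivity : (0:ℝ) ≤ c/(2*t^2)), hreal]
  have hψa : ∀ n : ℕ, ∀ t ∈ Ioc ((0:ℝ) + n) ((0:ℝ) + n + 1), ψ t ≤ a n := by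
    intro n t ht
    obtain ⟨ht1, ht2⟩ := ht
    rw [zero_add] at ht1 ht2
    have htpos : (0:ℝ) < t := lt_of_le_of_lt (Nat.cast_nonneg n) ht1
    have h1 : (t+1) ^ (-((d:ℝ)/2)) ≤ ((n:ℝ)+1) ^ (-((d:ℝ)/2)) :=
      Real.rpow_le_rpow_of_nonpos (by positivity) (by linarith)
        (by rw [neg_nonpos]; positivity)
    have h2 : Real.exp (-(c/(2*t))) ≤ Real.exp (-(c/(2*((n:ℝ)+1)))) := by
      apply Real.exp_le_exp.2
      apply neg_le_neg
      apply div_le_div_of_nonneg_left hc.le (by positivity)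
      linarith
    have h3 : Nf t ≤ Nf n := hNf_anti ht1.le
    rw [hψdef, hadef]
    simp only
    have hx1 : (0:ℝ) ≤ (t+1) ^ (-((d:ℝ)/2)) := Real.rpow_nonneg (by positivity) _
    have hx2 : (0:ℝ) ≤ C * ((n:ℝ)+1) ^ (-((d:ℝ)/2)) := by positivity
    have hx3 : (0:ℝ) ≤ C * ((n:ℝ)+1) ^ (-((d:ℝ)/2)) * Real.exp (-(c/(2*((n:ℝ)+1)))) := by
      positivity
    apply mul_le_mul _ h3 (hNf_nonneg _) hx3
    apply mul_le_mul _ h2 (Real.exp_pos _).le hx2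
    exact mul_le_mul le_rfl h1 hx1 hC.le
  have hφnn : (0:ℝ→ℝ) ≤ᵐ[volume.restrict (Ioi (0:ℝ))] φ := by
    filter_upwards [ae_restrict_mem measurableSet_Ioi] with s hs
    simp only [mem_Ioi] at hs
    rw [hφdef]
    simp only [Pi.zero_apply]
    have h1 : (0:ℝ) ≤ 1 + 2*s/c := by positivity
    exact mul_nonneg (mul_nonneg (mul_nonneg (Real.rpow_nonneg hs.le _)
      (Real.exp_nonneg _)) (Real.rpow_nonneg h1 _)) (hNf_nonneg _)
  have hlower : (∫ s in Ioi (0:ℝ), φ s) ≤ ∑' n, a n := by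
    rw [integral_eq_lintegral_of_nonneg_ae hφnn hφmeas.aestronglyMeasurable]
    have h2 : (∫⁻ s in Ioi (0:ℝ), ENNReal.ofReal (φ s))
        = ∫⁻ t in Ioi (0:ℝ), ENNReal.ofReal (ψ t) := by
      conv_lhs => rw [← image_inv_Ioi_zero hc]
      rw [my_lintegral_image measurableSet_Ioi (hasDeriv_inv le_rfl)
          (injOn_inv hc le_rfl)]
      exact setLIntegral_congr_fun measurableSet_Ioi hψtrans
    rw [h2]
    have h3 : (∫⁻ t in Ioi (0:ℝ), ENNReal.ofReal (ψ t))
        ≤ ENNReal.ofReal (∑' n, a n) := by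
      rw [Ioi_eq_iUnion' 0,
          lintegral_iUnion (fun n => measurableSet_Ioc) (pd_Ioc' 0),
          ENNReal.ofReal_tsum_of_nonneg ha_nonneg hSa]
      apply ENNReal.tsum_le_tsum
      intro n
      calc ∫⁻ t in Ioc ((0:ℝ) + n) ((0:ℝ) + n + 1), ENNReal.ofReal (ψ t)
          ≤ ∫⁻ _ in Ioc ((0:ℝ) + n) ((0:ℝ) + n + 1), ENNReal.ofReal (a n) :=
            setLIntegral_mono measurable_const
              (fun t ht => ENNReal.ofReal_le_ofReal (hψa n t ht))
        _ = ENNReal.ofReal (a n) * volume (Ioc ((0:ℝ) + n) ((0:ℝ) + n + 1)) :=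
            setLIntegral_const _ _
        _ = ENNReal.ofReal (a n) := by
            rw [Real.volume_Ioc,
                show ((0:ℝ) + n + 1 - ((0:ℝ) + n)) = 1 by ring,
                ENNReal.ofReal_one, mul_one]
    calc (∫⁻ t in Ioi (0:ℝ), ENNReal.ofReal (ψ t)).toReal
        ≤ (ENNReal.ofReal (∑' n, a n)).toReal :=
          ENNReal.toReal_mono ENNReal.ofReal_ne_top h3
      _ = ∑' n, a n := ENNReal.toReal_ofReal htsum_nonneg
  have hgoal1 : (∫ s in Ioi (0:ℝ),
      s ^ ((d:ℝ)/2 - 2) * Real.exp (-s) * (1 + 2*s/c) ^ (-(d:ℝ)/2) *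
        (ν {m : ℕ | 1/s < 2*(m:ℝ)/c}).toReal) = ∫ s in Ioi (0:ℝ), φ s := by
    apply setIntegral_congr_fun measurableSet_Ioi
    intro s hs
    simp only [mem_Ioi] at hs
    have hset : {m : ℕ | 1/s < 2*(m:ℝ)/c} = {m : ℕ | c/(2*s) < (m:ℝ)} := by
      ext m
      simp only [mem_setOf_eq]
      rw [div_lt_div_iff₀ (by positivity) hc, div_lt_iff₀ (by positivity)]
      constructor <;> intro h <;> nlinarith
    simp only [hφdef, hNfdef]
    rw [hset]
  -- ===================== upper bound machinery =====================
  set χ : ℝ → ℝ := fun s =>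
    s ^ ((d:ℝ)/2-2) * Real.exp (-s) * (1-2*s/c) ^ (-(d:ℝ)/2) * Nf (c/(2*s) - 2)
    with hχdef
  set ψ2 : ℝ → ℝ := fun t =>
    C * (t-1) ^ (-((d:ℝ)/2)) * Real.exp (-(c/(2*t))) * Nf (t-2) with hψ2def
  have hχmeas : Measurable χ := by
    rw [hχdef]
    exact (by fun_prop : Measurable (fun s : ℝ =>
        s ^ ((d:ℝ)/2-2) * Real.exp (-s) * (1-2*s/c) ^ (-(d:ℝ)/2))).mul
      (hNf_meas.comp (hinv_meas.sub_const 2))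
  have hψ2meas : Measurable ψ2 := by
    rw [hψ2def]
    exact (by fun_prop : Measurable (fun t : ℝ =>
        C * (t-1) ^ (-((d:ℝ)/2)) * Real.exp (-(c/(2*t))))).mul
      (hNf_meas.comp (measurable_id.sub_const 2))
  have hψ2trans : ∀ t ∈ Ioi (2:ℝ),
      ENNReal.ofReal |(-(c / (2 * t^2)))| * ENNReal.ofReal (χ (c/(2*t)))
        = ENNReal.ofReal (ψ2 t) := by
    intro t ht
    simp only [mem_Ioi] at ht
    have ht0 : (0:ℝ) < t := by linarith
    have harg : c/(2*(c/(2*t))) = t := by field_simp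
    have hreal : c/(2*t^2) * χ (c/(2*t)) = ψ2 t := by
      rw [hχdef, hψ2def]
      simp only
      rw [harg]
      have hk := pow_alg_upper (dd := (d:ℝ)) hc (by linarith : (1:ℝ) < t)
      calc c/(2*t^2) * ((c/(2*t)) ^ ((d:ℝ)/2-2) * Real.exp (-(c/(2*t)))
              * (1-2*(c/(2*t))/c) ^ (-(d:ℝ)/2) * Nf (t-2))
          = (c/(2*t^2) * (c/(2*t)) ^ ((d:ℝ)/2-2) * (1-2*(c/(2*t))/c) ^ (-(d:ℝ)/2))
              * (Real.exp (-(c/(2*t))) * Nf (t-2)) := by ring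
        _ = ((c/2) ^ ((d:ℝ)/2-1) * (t-1) ^ (-((d:ℝ)/2)))
              * (Real.exp (-(c/(2*t))) * Nf (t-2)) := by rw [hk]
        _ = C * (t-1) ^ (-((d:ℝ)/2)) * Real.exp (-(c/(2*t))) * Nf (t-2) := by
              rw [hCdef]; ring
    rw [abs_neg, abs_of_nonneg (by positivity : (0:ℝ) ≤ c/(2*t^2)),
        ← ENNReal.ofReal_mul (by positivity : (0:ℝ) ≤ c/(2*t^2)), hreal]
  have h2a : (∫⁻ s in Ioc (0:ℝ) (c/4), ENNReal.ofReal (χ s))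
      = ∫⁻ t in Ioi (2:ℝ), ENNReal.ofReal (ψ2 t) := by
    calc ∫⁻ s in Ioc (0:ℝ) (c/4), ENNReal.ofReal (χ s)
        = ∫⁻ s in Ioo (0:ℝ) (c/4), ENNReal.ofReal (χ s) :=
          (setLIntegral_congr Ioo_ae_eq_Ioc).symm
      _ = ∫⁻ s in (fun t : ℝ => c/(2*t)) '' Ioi 2, ENNReal.ofReal (χ s) := by
          rw [show (fun t : ℝ => c/(2*t)) '' Ioi 2 = Ioo (0:ℝ) (c/4) by
            rw [image_inv_Ioi_pos hc (by norm_num : (0:ℝ) < 2)]; norm_num]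
      _ = ∫⁻ t in Ioi (2:ℝ), ENNReal.ofReal |(-(c / (2 * t^2)))|
            * ENNReal.ofReal (χ (c/(2*t))) := by
          rw [my_lintegral_image measurableSet_Ioi (hasDeriv_inv (by norm_num))
            (injOn_inv hc (by norm_num))]
      _ = ∫⁻ t in Ioi (2:ℝ), ENNReal.ofReal (ψ2 t) :=
          setLIntegral_congr_fun measurableSet_Ioi hψ2trans
  have haψ2 : ∀ n : ℕ, ∀ t ∈ Ioc ((2:ℝ) + n) ((2:ℝ) + n + 1), a (n+1) ≤ ψ2 t := by
    intro n t ht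
    obtain ⟨ht1, ht2⟩ := ht
    have htpos : (0:ℝ) < t - 1 := by
      have : (0:ℝ) ≤ n := Nat.cast_nonneg n
      linarith
    have hcast : ((n+1:ℕ):ℝ) = (n:ℝ) + 1 := by push_cast; ring
    have h1 : (((n+1:ℕ):ℝ)+1) ^ (-((d:ℝ)/2)) ≤ (t-1) ^ (-((d:ℝ)/2)) := by
      apply Real.rpow_le_rpow_of_nonpos htpos
      · rw [hcast]; linarith
      · rw [neg_nonpos]; positivity
    have h2 : Real.exp (-(c/(2*(((n+1:ℕ):ℝ)+1)))) ≤ Real.exp (-(c/(2*t))) := by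
      apply Real.exp_le_exp.2
      apply neg_le_neg
      apply div_le_div_of_nonneg_left hc.le (by positivity)
      rw [hcast]; linarith
    have h3 : Nf ((n+1:ℕ):ℝ) ≤ Nf (t - 2) := by
      apply hNf_anti
      rw [hcast]; linarith
    rw [hψ2def, hadef]
    simp only
    have hx1 : (0:ℝ) ≤ (((n:ℕ):ℝ)+1+1) ^ (-((d:ℝ)/2)) := Real.rpow_nonneg (by positivity) _
    have hx2 : (0:ℝ) ≤ C * (t-1) ^ (-((d:ℝ)/2)) := by
      exact mul_nonneg hC.le (Real.rpow_nonneg htpos.le _)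
    have hx3 : (0:ℝ) ≤ C * (t-1) ^ (-((d:ℝ)/2)) * Real.exp (-(c/(2*t))) :=
      mul_nonneg hx2 (Real.exp_nonneg _)
    rw [hcast] at h1 h2 h3 ⊢
    apply mul_le_mul _ h3 (hNf_nonneg _) hx3
    apply mul_le_mul _ h2 (Real.exp_pos _).le hx2
    exact mul_le_mul le_rfl h1 (Real.rpow_nonneg (by positivity) _) hC.le
  have hψ2b : ∀ n : ℕ, ∀ t ∈ Ioc ((2:ℝ) + n) ((2:ℝ) + n + 1),
      ψ2 t ≤ C * ((n:ℝ)+1) ^ (-((d:ℝ)/2)) := by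
    intro n t ht
    obtain ⟨ht1, ht2⟩ := ht
    have htpos : (0:ℝ) < t - 1 := by
      have : (0:ℝ) ≤ n := Nat.cast_nonneg n
      linarith
    have h1 : (t-1) ^ (-((d:ℝ)/2)) ≤ ((n:ℝ)+1) ^ (-((d:ℝ)/2)) := by
      apply Real.rpow_le_rpow_of_nonpos (by positivity) (by linarith)
      rw [neg_nonpos]; positivity
    have h2 : Real.exp (-(c/(2*t))) ≤ 1 := by
      rw [Real.exp_le_one_iff]
      have h0 : (0:ℝ) < t := by linarith
      have : 0 < c/(2*t) := by positivity
      linarith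
    have h3 : Nf (t-2) ≤ 1 := hNf_le_one _
    rw [hψ2def]
    simp only
    calc C * (t-1) ^ (-((d:ℝ)/2)) * Real.exp (-(c/(2*t))) * Nf (t-2)
        ≤ C * ((n:ℝ)+1) ^ (-((d:ℝ)/2)) * 1 * 1 := by
          apply mul_le_mul _ h3 (hNf_nonneg _) (by positivity)
          apply mul_le_mul _ h2 (Real.exp_pos _).le (by positivity)
          exact mul_le_mul le_rfl h1 (Real.rpow_nonneg htpos.le _) hC.le
      _ = C * ((n:ℝ)+1) ^ (-((d:ℝ)/2)) := by ring
  have hdec2 := Ioi_eq_iUnion' (2:ℝ)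
  have hΛ : (∫⁻ t in Ioi (2:ℝ), ENNReal.ofReal (ψ2 t))
      = ∑' n : ℕ, ∫⁻ t in Ioc ((2:ℝ) + n) ((2:ℝ) + n + 1), ENNReal.ofReal (ψ2 t) := by
    rw [hdec2, lintegral_iUnion (fun n => measurableSet_Ioc) (pd_Ioc' 2)]
  have h2e : (∫⁻ t in Ioi (2:ℝ), ENNReal.ofReal (ψ2 t)) ≠ ⊤ := by
    rw [hΛ]
    apply ne_top_of_le_ne_top
      (b := ENNReal.ofReal (∑' n : ℕ, C * ((n:ℝ)+1) ^ (-((d:ℝ)/2))))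
    · exact ENNReal.ofReal_ne_top
    · rw [ENNReal.ofReal_tsum_of_nonneg (fun n => by positivity) hbound_summable]
      apply ENNReal.tsum_le_tsum
      intro n
      calc ∫⁻ t in Ioc ((2:ℝ) + n) ((2:ℝ) + n + 1), ENNReal.ofReal (ψ2 t)
          ≤ ∫⁻ _ in Ioc ((2:ℝ) + n) ((2:ℝ) + n + 1),
              ENNReal.ofReal (C * ((n:ℝ)+1) ^ (-((d:ℝ)/2))) :=
            setLIntegral_mono measurable_const
              (fun t ht => ENNReal.ofReal_le_ofReal (hψ2b n t ht))
        _ = ENNReal.ofReal (C * ((n:ℝ)+1) ^ (-((d:ℝ)/2)))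
              * volume (Ioc ((2:ℝ) + n) ((2:ℝ) + n + 1)) := setLIntegral_const _ _
        _ = ENNReal.ofReal (C * ((n:ℝ)+1) ^ (-((d:ℝ)/2))) := by
            rw [Real.volume_Ioc,
                show ((2:ℝ) + n + 1 - ((2:ℝ) + n)) = 1 by ring,
                ENNReal.ofReal_one, mul_one]
  have h2d : ENNReal.ofReal (∑' n : ℕ, a (n+1)) ≤ ∫⁻ t in Ioi (2:ℝ), ENNReal.ofReal (ψ2 t) := by
    rw [ENNReal.ofReal_tsum_of_nonneg (fun n => ha_nonneg _)
        ((summable_nat_add_iff 1).2 hSa), hΛ]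
    apply ENNReal.tsum_le_tsum
    intro n
    calc ENNReal.ofReal (a (n+1))
        = ENNReal.ofReal (a (n+1)) * volume (Ioc ((2:ℝ) + n) ((2:ℝ) + n + 1)) := by
          rw [Real.volume_Ioc,
              show ((2:ℝ) + n + 1 - ((2:ℝ) + n)) = 1 by ring,
              ENNReal.ofReal_one, mul_one]
      _ = ∫⁻ _ in Ioc ((2:ℝ) + n) ((2:ℝ) + n + 1), ENNReal.ofReal (a (n+1)) :=
          (setLIntegral_const _ _).symm
      _ ≤ ∫⁻ t in Ioc ((2:ℝ) + n) ((2:ℝ) + n + 1), ENNReal.ofReal (ψ2 t) :=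
          setLIntegral_mono (ENNReal.measurable_ofReal.comp hψ2meas)
            (fun t ht => ENNReal.ofReal_le_ofReal (haψ2 n t ht))
  have hχnn : (0:ℝ→ℝ) ≤ᵐ[volume.restrict (Ioc (0:ℝ) (c/4))] χ := by
    filter_upwards [ae_restrict_mem measurableSet_Ioc] with s hs
    obtain ⟨hs1, hs2⟩ := hs
    rw [hχdef]
    simp only [Pi.zero_apply]
    have h1 : (0:ℝ) ≤ 1 - 2*s/c := by
      rw [sub_nonneg, div_le_one hc]
      linarith
    exact mul_nonneg (mul_nonneg (mul_nonneg (Real.rpow_nonneg hs1.le _)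
      (Real.exp_nonneg _)) (Real.rpow_nonneg h1 _)) (hNf_nonneg _)
  have hgoal2 : (∫ s in Ioc (0:ℝ) (c/4),
      s ^ ((d:ℝ)/2 - 2) * Real.exp (-s) * (1 - 2*s/c) ^ (-(d:ℝ)/2) *
        (ν {m : ℕ | 1/s - 4/c < 2*(m:ℝ)/c}).toReal) = ∫ s in Ioc (0:ℝ) (c/4), χ s := by
    apply setIntegral_congr_fun measurableSet_Ioc
    intro s hs
    obtain ⟨hs1, hs2⟩ := hs
    have hset : {m : ℕ | 1/s - 4/c < 2*(m:ℝ)/c} = {m : ℕ | c/(2*s) - 2 < (m:ℝ)} := by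
      ext m
      simp only [mem_setOf_eq]
      rw [sub_lt_iff_lt_add, ← add_div, div_lt_div_iff₀ (by positivity) hc,
          sub_lt_iff_lt_add, div_lt_iff₀ (by positivity)]
      constructor <;> intro h <;> nlinarith
    simp only [hχdef, hNfdef]
    rw [hset]
  have hupper2 : (∑' n : ℕ, a (n+1)) ≤ ∫ s in Ioc (0:ℝ) (c/4), χ s := by
    rw [integral_eq_lintegral_of_nonneg_ae hχnn hχmeas.aestronglyMeasurable, h2a]
    have := ENNReal.toReal_mono h2e h2d
    rwa [ENNReal.toReal_ofReal (tsum_nonneg (fun n => ha_nonneg _))] at this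
  have hfirst : a 0 ≤ π ^ ((d:ℝ)/2) / (d:ℝ) * r ^ ((d:ℝ)-2) * pbar d 1 z := by
    have h1 : π ^ ((d:ℝ)/2) / (d:ℝ) * r ^ ((d:ℝ)-2) * pbar d 1 z
        = 2 * π ^ ((d:ℝ)/2) / (d:ℝ) * r ^ ((d:ℝ)-2) * (pbar d (0+1) z / 2) := by
      norm_num; ring
    rw [h1, hterm' 0]
    rw [hadef]
    simp only
    calc C * (((0:ℕ):ℝ)+1) ^ (-((d:ℝ)/2)) * Real.exp (-(c/(2*(((0:ℕ):ℝ)+1)))) * Nf ((0:ℕ):ℝ)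
        ≤ C * (((0:ℕ):ℝ)+1) ^ (-((d:ℝ)/2)) * Real.exp (-(c/(2*(((0:ℕ):ℝ)+1)))) * 1 := by
          apply mul_le_mul_of_nonneg_left (hNf_le_one _)
          positivity
      _ = C * (((0:ℕ):ℝ)+1) ^ (-((d:ℝ)/2)) * Real.exp (-(c/(2*(((0:ℕ):ℝ)+1)))) := by ring
  -- ===================== final assembly =====================
  constructor
  · rw [hRD, hgoal1]
    exact hlower
  · rw [hRD, hSa.tsum_eq_zero_add, hgoal2]
    exact add_le_add hfirst hupper2
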